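/- arXiv:2604.21157 — 3 statements merged into one kernel-verified Lean document; each statement's English description precedes it below -/
import Mathlib

section
/- Let N be an odd squarefree positive integer, m a divisor of N, and n > 0 an integer with n ≡ 0 or 3 (mod 4), written as −n = D_n·f_n² with D_n a fundamental discriminant. Then H_{m,N}(n) = L(0,χ_{D_n}) · (∏_{p prime, p | f_n, p ∤ N} D_p(n)) · (∏_{p prime, p | m} C_p(n)) · (∏_{p prime, p | N/m} A_p(n)). -/
open scoped BigOperators

/-- The Kronecker symbol `(D/p)` at a prime `p`. -/
def kronP (D : ℤ) (p : ℕ) : ℤ :=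
  if p = 2 then
    if D % 2 = 0 then 0 else if D % 8 = 1 ∨ D % 8 = 7 then 1 else -1
  else jacobiSym D p

/-- The Kronecker symbol `(D/m)` for positive `m`: the completely multiplicative
function of `m` determined by its values at primes. -/
def kron (D : ℤ) (m : ℕ) : ℤ :=
  m.factorization.prod fun p k => kronP D p ^ k

/-- Fundamental discriminant: `1`, or squarefree `≡ 1 (mod 4)`, or `4k` with
`k ≡ 2, 3 (mod 4)` squarefree. -/
def IsFundDisc (D : ℤ) : Prop :=
  D = 1 ∨ (D % 4 = 1 ∧ Squarefree D) ∨
    ∃ k : ℤ, D = 4 * k ∧ (k % 4 = 2 ∨ k % 4 = 3) ∧ Squarefree k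

/-- The decomposition `a = D·f²` with `D` a fundamental discriminant, `f ≥ 1`. -/
noncomputable def fdpair (a : ℤ) : ℤ × ℕ := by
  classical
  exact if h : ∃ p : ℤ × ℕ, IsFundDisc p.1 ∧ 1 ≤ p.2 ∧ a = p.1 * (p.2 : ℤ) ^ 2
    then h.choose else (0, 0)

/-- `D_n`, the fundamental discriminant with `-n = D_n · f_n²`. -/
noncomputable def Dn (n : ℕ) : ℤ := (fdpair (-(n : ℤ))).1

/-- `f_n`, the conductor with `-n = D_n · f_n²`. -/
noncomputable def fn (n : ℕ) : ℕ := (fdpair (-(n : ℤ))).2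

/-- `f_p := p^(v_p f)`, the `p`-part of `f`. -/
def ppart (f p : ℕ) : ℕ := p ^ f.factorization p

/-- The weight `w(a,b,c)` in the definition of the Hurwitz class number. -/
def hurwitzW (a b c : ℤ) : ℚ :=
  if a = b ∧ b = c then 3 else if b = 0 ∧ a = c then 2 else 1

/-- The Hurwitz class number `H(n)`: `H(0) = -1/12`, and for `n > 0` the weighted
count of reduced forms of discriminant `-n` (automatically `0` for `n ≡ 1, 2 mod 4`). -/
noncomputable def hurwitz (n : ℕ) : ℚ :=
  if n = 0 then -(1 / 12)
  else
    ∑ a ∈ Finset.Icc (1 : ℤ) (n : ℤ), ∑ b ∈ Finset.Icc (-(n : ℤ)) (n : ℤ),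
      ∑ c ∈ Finset.Icc (1 : ℤ) ((n : ℤ) ^ 2 + (n : ℤ)),
        if b ^ 2 - 4 * a * c = -(n : ℤ) ∧ |b| ≤ a ∧ a ≤ c ∧ ((|b| = a ∨ a = c) → 0 ≤ b)
        then (hurwitzW a b c)⁻¹ else 0

/-- `L(0, χ_D) = -(1/|D|) Σ_{a=1}^{|D|} (D/a) a` for a fundamental discriminant `D < 0`. -/
noncomputable def Lval (D : ℤ) : ℚ :=
  -(1 / (D.natAbs : ℚ)) * ∑ a ∈ Finset.Icc 1 D.natAbs, (kron D a : ℚ) * (a : ℚ)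

/-- `L_m(0, χ_D) = L(0,χ_D) ∏_{p ∣ m} (1 - (D/p))`. -/
noncomputable def LvalM (m : ℕ) (D : ℤ) : ℚ :=
  Lval D * ∏ p ∈ m.primeFactors, (1 - (kron D p : ℚ))

/-- `σ_{m,N,1}(r) = Σ_{d ∣ r, gcd(d,m)=1, gcd(r/d, N/m)=1} d`. -/
def sigmaMN (m N r : ℕ) : ℕ :=
  ∑ d ∈ r.divisors, if Nat.gcd d m = 1 ∧ Nat.gcd (r / d) (N / m) = 1 then d else 0

/-- The Pei–Wang generalized Hurwitz class number `H_{m,N}(n)`. -/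
noncomputable def HPW (m N n : ℕ) : ℚ :=
  if n = 0 then
    if m = N then -(1 / 12) * ∏ p ∈ N.primeFactors, (1 - (p : ℚ)) else 0
  else if n % 4 = 0 ∨ n % 4 = 3 then
    LvalM m (Dn n) *
      (∏ p ∈ (N / m).primeFactors,
        (1 - (kron (Dn n) p : ℚ) / (p : ℚ)) / (1 - ((p : ℚ)⁻¹) ^ 2)) *
      ∑ a ∈ (fn n).divisors,
        if Nat.gcd a N = 1 then
          (ArithmeticFunction.moebius a : ℚ) * (kron (Dn n) a : ℚ) *
            (sigmaMN m N (fn n / a) : ℚ)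
        else 0
  else 0

/-- The Li–Skoruppa–Zhou modified class number `H^{(N₁,N₂)}(n)`. -/
noncomputable def HLSZ (N₁ N₂ n : ℕ) : ℚ :=
  if n = 0 then
    -(1 / 12) * (∏ p ∈ N₁.primeFactors, (1 - (p : ℚ))) *
      ∏ p ∈ N₂.primeFactors, ((p : ℚ) + 1)
  else if n % 4 = 0 ∨ n % 4 = 3 then
    hurwitz (n / (∏ p ∈ (N₁ * N₂).primeFactors, ppart (fn n) p) ^ 2) *
      (∏ p ∈ N₁.primeFactors, (1 - (kron (Dn n) p : ℚ))) *
      ∏ p ∈ N₂.primeFactors,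
        ((2 * (p : ℚ) * (ppart (fn n) p : ℚ) - (p : ℚ) - 1 -
            (kron (Dn n) p : ℚ) * (2 * (ppart (fn n) p : ℚ) - (p : ℚ) - 1)) /
          ((p : ℚ) - 1))
  else 0

/-- Number of distinct prime divisors, `ω(N)`. -/
def omegaN (N : ℕ) : ℕ := N.primeFactors.card

/-- The local factor `A_p(n)`, for `-n = D·f²`. -/
noncomputable def locA (D : ℤ) (f p : ℕ) : ℚ :=
  (ppart f p : ℚ) * (1 - (kron D p : ℚ) / (p : ℚ)) / (1 - ((p : ℚ)⁻¹) ^ 2)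

/-- The local factor `B_p(n)`, for `-n = D·f²`. -/
noncomputable def locB (D : ℤ) (f p : ℕ) : ℚ :=
  (2 * (p : ℚ) * (ppart f p : ℚ) - (p : ℚ) - 1 -
      (kron D p : ℚ) * (2 * (ppart f p : ℚ) - (p : ℚ) - 1)) / ((p : ℚ) - 1)

/-- The local factor `C_p(n)`, for `-n = D·f²`. -/
noncomputable def locC (D : ℤ) (p : ℕ) : ℚ := 1 - (kron D p : ℚ)

/-- The local factor `D_p(n) = σ₁(f_p) - σ₁(f_p/p)·(D/p)`, for `-n = D·f²`. -/
noncomputable def locD (D : ℤ) (f p : ℕ) : ℚ :=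
  (ArithmeticFunction.sigma 1 (ppart f p) : ℚ) -
    (ArithmeticFunction.sigma 1 (ppart f p / p) : ℚ) * (kron D p : ℚ)

/-- The character local factor `D_p(ℓ,n) = σ₁(f_p) - σ₁(f_p/p)·(D_{ℓ,n}/p)·(p/ℓ)`. -/
noncomputable def locDchar (l : ℕ) (D : ℤ) (f p : ℕ) : ℚ :=
  (ArithmeticFunction.sigma 1 (ppart f p) : ℚ) -
    (ArithmeticFunction.sigma 1 (ppart f p / p) : ℚ) * (kron D p : ℚ) *
      (jacobiSym (p : ℤ) l : ℚ)

/-- The Pei–Wang generalized class number `H(ℓ, m, N; n)` with character `χ_ℓ`. -/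
noncomputable def HPWchar (l m N n : ℕ) : ℚ := by
  classical
  exact
    if n = 0 then
      if m = N then -(1 / 12) * ∏ p ∈ N.primeFactors, (1 - (p : ℚ)) else 0
    else if (∃ q : ℤ × ℕ, IsFundDisc q.1 ∧ 1 ≤ q.2 ∧
            -(((-1 : ℤ) ^ ((l - 1) / 2)) * (n : ℤ)) = q.1 * (q.2 : ℤ) ^ 2) ∧
        (∃ q : ℤ × ℕ, IsFundDisc q.1 ∧ 1 ≤ q.2 ∧
            -((l : ℤ) * (n : ℤ)) = q.1 * (q.2 : ℤ) ^ 2) then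
      LvalM m (fdpair (-((l : ℤ) * (n : ℤ)))).1 *
        (∏ p ∈ (N / m).primeFactors,
          (1 - (kron (fdpair (-((l : ℤ) * (n : ℤ)))).1 p : ℚ) / (p : ℚ)) /
            (1 - ((p : ℚ)⁻¹) ^ 2)) *
        ((Int.gcd (l : ℤ) (fdpair (-(((-1 : ℤ) ^ ((l - 1) / 2)) * (n : ℤ)))).1 : ℚ) /
          (Nat.gcd (Int.gcd (l : ℤ) (fdpair (-(((-1 : ℤ) ^ ((l - 1) / 2)) * (n : ℤ)))).1) m : ℚ)) *
        ∑ a ∈ (fdpair (-(((-1 : ℤ) ^ ((l - 1) / 2)) * (n : ℤ)))).2.divisors,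
          if Nat.gcd a N = 1 then
            (ArithmeticFunction.moebius a : ℚ) *
              (kron (fdpair (-(((-1 : ℤ) ^ ((l - 1) / 2)) * (n : ℤ)))).1 a : ℚ) *
              (jacobiSym (a : ℤ) l : ℚ) *
              (sigmaMN m N ((fdpair (-(((-1 : ℤ) ^ ((l - 1) / 2)) * (n : ℤ)))).2 / a) : ℚ)
          else 0
    else 0


section PWAux

open ArithmeticFunction Finset

lemma sf_unique_nat {a b s t : ℕ} (ha : Squarefree a) (hb : Squarefree b)
    (hs : s ≠ 0) (ht : t ≠ 0) (h : a * s ^ 2 = b * t ^ 2) : a = b ∧ s = t := by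
  have hg : 0 < Nat.gcd s t := Nat.gcd_pos_of_pos_left _ (Nat.pos_of_ne_zero hs)
  set g := Nat.gcd s t with hgdef
  set s' := s / g with hs'def
  set t' := t / g with ht'def
  have hs' : s = g * s' := (Nat.mul_div_cancel' (Nat.gcd_dvd_left s t)).symm
  have ht' : t = g * t' := (Nat.mul_div_cancel' (Nat.gcd_dvd_right s t)).symm
  have hco : Nat.Coprime s' t' := Nat.coprime_div_gcd_div_gcd hg
  have hkey : a * s' ^ 2 = b * t' ^ 2 := by
    have h2 : (a * s' ^ 2) * g ^ 2 = (b * t' ^ 2) * g ^ 2 := by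
      rw [hs', ht'] at h; ring_nf at h ⊢; linarith [h]
    exact Nat.eq_of_mul_eq_mul_right (pow_pos hg 2) h2
  have hs'1 : s' = 1 := by
    have hdvd : s' ^ 2 ∣ b * t' ^ 2 := ⟨a, by rw [← hkey]; ring⟩
    have hdvd2 : s' ^ 2 ∣ b := (Nat.Coprime.pow 2 2 hco).dvd_of_dvd_mul_right hdvd
    exact Nat.isUnit_iff.mp (hb s' (by rwa [← pow_two]))
  have ht'1 : t' = 1 := by
    have hdvd : t' ^ 2 ∣ a * s' ^ 2 := ⟨b, by rw [hkey]; ring⟩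
    have hdvd2 : t' ^ 2 ∣ a := (Nat.Coprime.pow 2 2 hco.symm).dvd_of_dvd_mul_right hdvd
    exact Nat.isUnit_iff.mp (ha t' (by rwa [← pow_two]))
  have hst : s = t := by rw [hs', ht', hs'1, ht'1]
  refine ⟨?_, hst⟩
  rw [hst] at h
  exact Nat.eq_of_mul_eq_mul_right (pow_pos (Nat.pos_of_ne_zero ht) 2) h

lemma sf_unique_int {a b : ℤ} {s t : ℕ} (ha : Squarefree a) (hb : Squarefree b)
    (ha0 : a < 0) (hb0 : b < 0) (hs : s ≠ 0) (ht : t ≠ 0)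
    (h : a * (s : ℤ) ^ 2 = b * (t : ℤ) ^ 2) : a = b ∧ s = t := by
  have hnat : a.natAbs * s ^ 2 = b.natAbs * t ^ 2 := by
    have := congrArg Int.natAbs h
    simpa [Int.natAbs_mul, Int.natAbs_pow] using this
  obtain ⟨h1, h2⟩ := sf_unique_nat (Int.squarefree_natAbs.mpr ha)
    (Int.squarefree_natAbs.mpr hb) hs ht hnat
  exact ⟨by omega, h2⟩

lemma fd_unique {D1 D2 : ℤ} {f1 f2 : ℕ} (h1 : IsFundDisc D1) (h2 : IsFundDisc D2)
    (hf1 : 1 ≤ f1) (hf2 : 1 ≤ f2) (hneg : D1 * (f1 : ℤ) ^ 2 < 0)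
    (h : D1 * (f1 : ℤ) ^ 2 = D2 * (f2 : ℤ) ^ 2) : D1 = D2 ∧ f1 = f2 := by
  have hf1' : (0 : ℤ) < (f1 : ℤ) ^ 2 := by positivity
  have hf2' : (0 : ℤ) < (f2 : ℤ) ^ 2 := by
    have : (0:ℕ) < f2 := hf2
    positivity
  have hD1 : D1 < 0 := by nlinarith
  have hD2 : D2 < 0 := by nlinarith [h ▸ hneg]
  have hf1n : f1 ≠ 0 := by omega
  have hf2n : f2 ≠ 0 := by omega
  rcases h1 with rfl | ⟨hm1, hsf1⟩ | ⟨k1, rfl, hk1, hsk1⟩ <;>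
    rcases h2 with rfl | ⟨hm2, hsf2⟩ | ⟨k2, rfl, hk2, hsk2⟩
  · omega
  · omega
  · omega
  · omega
  · exact sf_unique_int hsf1 hsf2 hD1 hD2 hf1n hf2n h
  · -- D1 ≡ 1 mod 4 squarefree, D2 = 4k2
    exfalso
    have hk2neg : k2 < 0 := by nlinarith
    have h' : D1 * (f1 : ℤ) ^ 2 = k2 * ((2 * f2 : ℕ) : ℤ) ^ 2 := by push_cast; linarith [h]; 
    obtain ⟨hEq, -⟩ := sf_unique_int hsf1 hsk2 hD1 hk2neg hf1n (by omega) h'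
    omega
  · omega
  · -- D1 = 4k1, D2 ≡ 1 mod 4 squarefree
    exfalso
    have hk1neg : k1 < 0 := by nlinarith
    have h' : k1 * ((2 * f1 : ℕ) : ℤ) ^ 2 = D2 * (f2 : ℤ) ^ 2 := by push_cast; linarith [h]
    obtain ⟨hEq, -⟩ := sf_unique_int hsk1 hsf2 hk1neg hD2 (by omega) hf2n h'
    omega
  · have hk1neg : k1 < 0 := by nlinarith
    have hk2neg : k2 < 0 := by nlinarith
    have h' : k1 * ((2 * f1 : ℕ) : ℤ) ^ 2 = k2 * ((2 * f2 : ℕ) : ℤ) ^ 2 := by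
      push_cast; linarith [h]
    obtain ⟨hEq, hEq2⟩ := sf_unique_int hsk1 hsk2 hk1neg hk2neg (by omega) (by omega) h'
    constructor
    · omega
    · omega

lemma fdpair_eq {a D : ℤ} {f : ℕ} (hD : IsFundDisc D) (hf : 1 ≤ f)
    (ha : a = D * (f : ℤ) ^ 2) (hneg : a < 0) : fdpair a = (D, f) := by
  have hE : ∃ p : ℤ × ℕ, IsFundDisc p.1 ∧ 1 ≤ p.2 ∧ a = p.1 * (p.2 : ℤ) ^ 2 :=
    ⟨(D, f), hD, hf, ha⟩
  rw [fdpair, dif_pos hE]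
  obtain ⟨h1, h2, h3⟩ := hE.choose_spec
  obtain ⟨hD', hf'⟩ := fd_unique h1 hD h2 hf (h3 ▸ hneg) (by rw [← h3, ← ha])
  exact Prod.ext hD' hf'

end PWAux
section PWAux2

open ArithmeticFunction Finset

lemma kron_one' (D : ℤ) : kron D 1 = 1 := by simp [kron]

lemma kron_mul' (D : ℤ) {a b : ℕ} (ha : a ≠ 0) (hb : b ≠ 0) :
    kron D (a * b) = kron D a * kron D b := by
  unfold kron
  rw [Nat.factorization_mul ha hb]
  exact Finsupp.prod_add_index' (fun p => pow_zero _) (fun p k1 k2 => pow_add _ _ _)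

lemma kron_prime (D : ℤ) {p : ℕ} (hp : p.Prime) : kron D p = kronP D p := by
  rw [kron, hp.factorization, Finsupp.prod_single_index (h := fun p k => kronP D p ^ k) (pow_zero _), pow_one]

lemma kron_prime_pow (D : ℤ) {p : ℕ} (hp : p.Prime) (k : ℕ) :
    kron D (p ^ k) = kronP D p ^ k := by
  rcases Nat.eq_zero_or_pos k with rfl | hk
  · simp [kron]
  · rw [kron, hp.factorization_pow, Finsupp.prod_single_index (h := fun p k => kronP D p ^ k) (pow_zero _)]

/-- `u a = μ(a) (D/a)` restricted to `gcd(a,N)=1`. -/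
noncomputable def auxU (D : ℤ) (N : ℕ) : ArithmeticFunction ℚ :=
  ⟨fun a => if Nat.gcd a N = 1 then (moebius a : ℚ) * (kron D a : ℚ) else 0, by simp⟩

/-- `h₁ d = d` restricted to `gcd(d,m)=1`. -/
def auxH1 (m : ℕ) : ArithmeticFunction ℚ :=
  ⟨fun d => if Nat.gcd d m = 1 then (d : ℚ) else 0, by simp⟩

/-- `h₂ e = 1` restricted to `gcd(e,c)=1`. -/
def auxH2 (c : ℕ) : ArithmeticFunction ℚ :=
  ⟨fun e => if Nat.gcd e c = 1 ∧ e ≠ 0 then 1 else 0, by simp⟩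

lemma auxU_apply (D : ℤ) (N a : ℕ) :
    auxU D N a = if Nat.gcd a N = 1 then (moebius a : ℚ) * (kron D a : ℚ) else 0 := rfl

lemma auxH1_apply (m d : ℕ) : auxH1 m d = if Nat.gcd d m = 1 then (d : ℚ) else 0 := rfl

lemma auxH2_apply (c e : ℕ) : auxH2 c e = if Nat.gcd e c = 1 ∧ e ≠ 0 then 1 else 0 := rfl

lemma auxU_mult (D : ℤ) (N : ℕ) : (auxU D N).IsMultiplicative := by
  constructor
  · simp [auxU_apply, kron_one']
  · intro a b hab
    rcases Nat.eq_zero_or_pos a with rfl | ha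
    · simp [auxU_apply]
    rcases Nat.eq_zero_or_pos b with rfl | hb
    · simp [auxU_apply]
    have hiff : Nat.gcd (a * b) N = 1 ↔ (Nat.gcd a N = 1 ∧ Nat.gcd b N = 1) :=
      Nat.coprime_mul_iff_left
    simp only [auxU_apply, hiff]
    by_cases h1 : Nat.gcd a N = 1 <;> by_cases h2 : Nat.gcd b N = 1 <;>
      simp [h1, h2]
    rw [isMultiplicative_moebius.map_mul_of_coprime hab, kron_mul' D ha.ne' hb.ne']
    push_cast
    ring

lemma auxH1_mult (m : ℕ) : (auxH1 m).IsMultiplicative := by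
  constructor
  · simp [auxH1_apply]
  · intro a b hab
    have hiff : Nat.gcd (a * b) m = 1 ↔ (Nat.gcd a m = 1 ∧ Nat.gcd b m = 1) :=
      Nat.coprime_mul_iff_left
    simp only [auxH1_apply, hiff]
    by_cases h1 : Nat.gcd a m = 1 <;> by_cases h2 : Nat.gcd b m = 1 <;> simp [h1, h2]

lemma auxH2_mult (c : ℕ) : (auxH2 c).IsMultiplicative := by
  constructor
  · simp [auxH2_apply]
  · intro a b hab
    have hiff : Nat.gcd (a * b) c = 1 ↔ (Nat.gcd a c = 1 ∧ Nat.gcd b c = 1) :=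
      Nat.coprime_mul_iff_left
    simp only [auxH2_apply, hiff, mul_ne_zero_iff]
    by_cases h1 : Nat.gcd a c = 1 <;> by_cases h2 : Nat.gcd b c = 1 <;>
      by_cases h3 : a = 0 <;> by_cases h4 : b = 0 <;> simp [h1, h2, h3, h4]

lemma sigmaMN_eq (m N r : ℕ) : ((sigmaMN m N r : ℚ)) = (auxH1 m * auxH2 (N / m)) r := by
  rcases Nat.eq_zero_or_pos r with rfl | hr
  · simp [sigmaMN]
  rw [mul_apply, Nat.sum_divisorsAntidiagonal (f := fun a b => auxH1 m a * auxH2 (N / m) b)]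
  rw [sigmaMN, Nat.cast_sum]
  refine Finset.sum_congr rfl fun d hd => ?_
  rw [Nat.mem_divisors] at hd
  have hd0 : r / d ≠ 0 := by
    have := Nat.div_pos (Nat.le_of_dvd hr hd.1) (Nat.pos_of_mem_divisors (by
      rw [Nat.mem_divisors]; exact hd))
    omega
  rw [auxH1_apply, auxH2_apply]
  by_cases h1 : Nat.gcd d m = 1 <;> by_cases h2 : Nat.gcd (r / d) (N / m) = 1 <;>
    simp [h1, h2, hd0]

end PWAux2
section PWAux3

open ArithmeticFunction Finset

lemma conv_prime_pow (g h : ArithmeticFunction ℚ) {p : ℕ} (hp : p.Prime) (i : ℕ) :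
    (g * h) (p ^ i) = ∑ j ∈ range (i + 1), g (p ^ j) * h (p ^ (i - j)) := by
  rw [mul_apply, Nat.sum_divisorsAntidiagonal (f := fun a b => g a * h b),
    Nat.sum_divisors_prime_pow hp]
  refine sum_congr rfl fun j hj => ?_
  rw [mem_range] at hj
  rw [Nat.pow_div (by omega) hp.pos]

lemma sigma_one_pp {p : ℕ} (hp : p.Prime) (i : ℕ) :
    ((ArithmeticFunction.sigma 1 (p ^ i) : ℕ) : ℚ) = ∑ j ∈ range (i + 1), (p : ℚ) ^ j := by
  rw [sigma_one_apply, Nat.sum_divisors_prime_pow hp]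
  push_cast
  rfl

lemma auxU_p (D : ℤ) (N : ℕ) {p : ℕ} (hp : p.Prime) (hpN : ¬p ∣ N) :
    auxU D N p = -(kron D p : ℚ) := by
  rw [auxU_apply, if_pos ((Nat.Prime.coprime_iff_not_dvd hp).mpr hpN),
    moebius_apply_prime hp]
  push_cast; ring

lemma auxU_pp_zero (D : ℤ) (N : ℕ) {p j : ℕ} (hp : p.Prime) (hj : 2 ≤ j) :
    auxU D N (p ^ j) = 0 := by
  rw [auxU_apply, moebius_apply_prime_pow hp (by omega)]
  split <;> simp [show j ≠ 1 by omega]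

lemma auxU_pp_zero' (D : ℤ) (N : ℕ) {p j : ℕ} (hp : p.Prime) (hpN : p ∣ N) (hj : j ≠ 0) :
    auxU D N (p ^ j) = 0 := by
  rcases Nat.lt_or_ge j 2 with hj2 | hj2
  · have hj1 : j = 1 := by omega
    subst hj1
    rw [pow_one, auxU_apply, if_neg]
    intro hco
    have hpd : p ∣ 1 := hco ▸ Nat.dvd_gcd dvd_rfl hpN
    exact hp.one_lt.ne' (Nat.dvd_one.mp hpd)
  · exact auxU_pp_zero D N hp hj2

lemma auxH1_pp_not_dvd {m p : ℕ} (hp : p.Prime) (hpm : ¬p ∣ m) (j : ℕ) :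
    auxH1 m (p ^ j) = (p : ℚ) ^ j := by
  rw [auxH1_apply, if_pos (Nat.Coprime.pow_left j ((Nat.Prime.coprime_iff_not_dvd hp).mpr hpm))]
  push_cast; rfl

lemma auxH1_pp_dvd {m p j : ℕ} (hp : p.Prime) (hpm : p ∣ m) (hj : j ≠ 0) :
    auxH1 m (p ^ j) = 0 := by
  rw [auxH1_apply, if_neg]
  intro hco
  have hpd : p ∣ 1 := hco ▸ Nat.dvd_gcd (dvd_pow_self p hj) hpm
  exact hp.one_lt.ne' (Nat.dvd_one.mp hpd)

lemma auxH2_pp_not_dvd {c p : ℕ} (hp : p.Prime) (hpc : ¬p ∣ c) (j : ℕ) :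
    auxH2 c (p ^ j) = 1 := by
  rw [auxH2_apply, if_pos]
  exact ⟨Nat.Coprime.pow_left j ((Nat.Prime.coprime_iff_not_dvd hp).mpr hpc),
    pow_ne_zero j hp.pos.ne'⟩

lemma auxH2_pp_dvd {c p j : ℕ} (hp : p.Prime) (hpc : p ∣ c) (hj : j ≠ 0) :
    auxH2 c (p ^ j) = 0 := by
  rw [auxH2_apply, if_neg]
  rintro ⟨hco, -⟩
  have hpd : p ∣ 1 := hco ▸ Nat.dvd_gcd (dvd_pow_self p hj) hpc
  exact hp.one_lt.ne' (Nat.dvd_one.mp hpd)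

lemma sig_pp_out {m c p : ℕ} (hp : p.Prime) (hpm : ¬p ∣ m) (hpc : ¬p ∣ c) (i : ℕ) :
    (auxH1 m * auxH2 c) (p ^ i) = ∑ j ∈ range (i + 1), (p : ℚ) ^ j := by
  rw [conv_prime_pow _ _ hp i]
  refine sum_congr rfl fun j hj => ?_
  rw [auxH1_pp_not_dvd hp hpm, auxH2_pp_not_dvd hp hpc, mul_one]

lemma sig_pp_m {m c p : ℕ} (hp : p.Prime) (hpm : p ∣ m) (hpc : ¬p ∣ c) (i : ℕ) :
    (auxH1 m * auxH2 c) (p ^ i) = 1 := by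
  rw [conv_prime_pow _ _ hp i]
  rw [Finset.sum_eq_single 0]
  · rw [pow_zero, (auxH1_mult m).1, Nat.sub_zero, auxH2_pp_not_dvd hp hpc, one_mul]
  · intro j hj hj0
    rw [auxH1_pp_dvd hp hpm hj0, zero_mul]
  · intro h
    exact absurd (mem_range.mpr (by omega)) h

lemma sig_pp_c {m c p : ℕ} (hp : p.Prime) (hpm : ¬p ∣ m) (hpc : p ∣ c) (i : ℕ) :
    (auxH1 m * auxH2 c) (p ^ i) = (p : ℚ) ^ i := by
  rw [conv_prime_pow _ _ hp i]
  rw [Finset.sum_eq_single i]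
  · rw [auxH1_pp_not_dvd hp hpm, Nat.sub_self, pow_zero, (auxH2_mult c).1, mul_one]
  · intro j hj hji
    rw [mem_range] at hj
    rw [auxH2_pp_dvd hp hpc (by omega), mul_zero]
  · intro h
    exact absurd (mem_range.mpr (by omega)) h

lemma F_pp_inN (D : ℤ) {N m c p : ℕ} (hp : p.Prime) (hpN : p ∣ N) (k : ℕ) :
    (auxU D N * (auxH1 m * auxH2 c)) (p ^ k) = (auxH1 m * auxH2 c) (p ^ k) := by
  rw [conv_prime_pow _ _ hp k]
  rw [Finset.sum_eq_single 0]
  · rw [pow_zero, (auxU_mult D N).1, Nat.sub_zero, one_mul]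
  · intro j hj hj0
    rw [auxU_pp_zero' D N hp hpN hj0, zero_mul]
  · intro h
    exact absurd (mem_range.mpr (by omega)) h

lemma F_pp_out (D : ℤ) {N m c p : ℕ} (hp : p.Prime) (hpN : ¬p ∣ N) (hpm : ¬p ∣ m)
    (hpc : ¬p ∣ c) {k : ℕ} (hk : k ≠ 0) :
    (auxU D N * (auxH1 m * auxH2 c)) (p ^ k) =
      (∑ j ∈ range (k + 1), (p : ℚ) ^ j) -
        (kron D p : ℚ) * ∑ j ∈ range k, (p : ℚ) ^ j := by
  rw [conv_prime_pow _ _ hp k]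
  have hsub : ({0, 1} : Finset ℕ) ⊆ range (k + 1) := by
    intro x hx
    simp only [mem_insert, mem_singleton] at hx
    rw [mem_range]
    omega
  rw [← Finset.sum_subset hsub (fun j hj hnj => by
    have hj2 : 2 ≤ j := by
      simp only [mem_insert, mem_singleton] at hnj
      omega
    rw [auxU_pp_zero D N hp hj2, zero_mul])]
  rw [Finset.sum_pair (by norm_num : (0 : ℕ) ≠ 1)]
  rw [pow_zero, (auxU_mult D N).1, Nat.sub_zero, pow_one, auxU_p D N hp hpN,
    sig_pp_out hp hpm hpc, sig_pp_out hp hpm hpc,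
    show k - 1 + 1 = k by omega]
  ring

end PWAux3
/-- Local expression for the Pei–Wang class number. -/
theorem PW_local (N m n : ℕ) (hN : 0 < N) (hNodd : Odd N) (hNsf : Squarefree N)
    (hm : m ∣ N) (hn : 0 < n) (h4 : n % 4 = 0 ∨ n % 4 = 3)
    (D : ℤ) (f : ℕ) (hD : IsFundDisc D) (hf : 1 ≤ f)
    (hDf : -(n : ℤ) = D * (f : ℤ) ^ 2) :
    HPW m N n =
      Lval D * (∏ p ∈ f.primeFactors.filter fun p => ¬p ∣ N, locD D f p) *
        (∏ p ∈ m.primeFactors, locC D p) *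
        ∏ p ∈ (N / m).primeFactors, locA D f p := by
  classical
  open ArithmeticFunction Finset in
  have hNne : N ≠ 0 := hN.ne'
  set c := N / m with hc
  have hmc : m * c = N := Nat.mul_div_cancel' hm
  have hcop : Nat.Coprime m c := Nat.coprime_of_squarefree_mul (by rw [hmc]; exact hNsf)
  have hmne : m ≠ 0 := by rintro rfl; rw [zero_mul] at hmc; exact hNne hmc.symm
  have hcne : c ≠ 0 := by
    intro h; rw [h, mul_zero] at hmc; exact hNne hmc.symm
  have hcdvd : c ∣ N := Nat.div_dvd_of_dvd hm
  have hfne : f ≠ 0 := by omega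
  have hneg : -(n : ℤ) < 0 := by omega
  have hpair : fdpair (-(n : ℤ)) = (D, f) := fdpair_eq hD hf hDf hneg
  have hDn : Dn n = D := by rw [Dn, hpair]
  have hfn : fn n = f := by rw [fn, hpair]
  rw [HPW, if_neg hn.ne', if_pos h4, hDn, hfn]
  -- rewrite the sum as a Dirichlet convolution value
  have hS : (∑ a ∈ f.divisors,
        if Nat.gcd a N = 1 then
          (ArithmeticFunction.moebius a : ℚ) * (kron D a : ℚ) * (sigmaMN m N (f / a) : ℚ)
        else 0)
      = (auxU D N * (auxH1 m * auxH2 c)) f := by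
    rw [ArithmeticFunction.mul_apply,
      Nat.sum_divisorsAntidiagonal (f := fun a b => auxU D N a * (auxH1 m * auxH2 c) b)]
    refine Finset.sum_congr rfl fun a ha => ?_
    rw [auxU_apply, hc, ← sigmaMN_eq]
    by_cases hco : Nat.gcd a N = 1
    · simp [hco, mul_assoc]
    · simp [hco]
  rw [hS]
  have hmult := (auxU_mult D N).mul ((auxH1_mult m).mul (auxH2_mult c))
  rw [hmult.multiplicative_factorization _ hfne,
    Nat.prod_factorization_eq_prod_primeFactors]
  rw [← Finset.prod_filter_mul_prod_filter_not f.primeFactors (fun p => ¬p ∣ N)]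
  -- the part with p ∤ N gives the locD product
  have hOut : ∀ p ∈ f.primeFactors.filter (fun p => ¬p ∣ N),
      (auxU D N * (auxH1 m * auxH2 c)) (p ^ f.factorization p) = locD D f p := by
    intro p hp'
    rw [Finset.mem_filter] at hp'
    obtain ⟨hpf, hpN⟩ := hp'
    have hp : p.Prime := Nat.prime_of_mem_primeFactors hpf
    have hk : f.factorization p ≠ 0 := by
      have := (Nat.support_factorization f) ▸ hpf
      exact Finsupp.mem_support_iff.mp this
    have hpm : ¬p ∣ m := fun h => hpN (h.trans hm)
    have hpc : ¬p ∣ c := fun h => hpN (h.trans hcdvd)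
    rw [F_pp_out D hp hpN hpm hpc hk, locD]
    have hpp : ppart f p = p ^ f.factorization p := rfl
    have hdiv : ppart f p / p = p ^ (f.factorization p - 1) := by
      rw [hpp, show p ^ f.factorization p / p = p ^ f.factorization p / p ^ 1 by rw [pow_one]]
      exact Nat.pow_div (by omega) hp.pos
    rw [hdiv, hpp, sigma_one_pp hp, sigma_one_pp hp,
      show f.factorization p - 1 + 1 = f.factorization p by omega]
    ring
  rw [Finset.prod_congr rfl hOut]
  -- the part with p ∣ N
  have hIn : ∀ p ∈ f.primeFactors.filter (fun p => ¬¬p ∣ N),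
      (auxU D N * (auxH1 m * auxH2 c)) (p ^ f.factorization p) =
        if p ∣ m then 1 else (p : ℚ) ^ f.factorization p := by
    intro p hp'
    rw [Finset.mem_filter, not_not] at hp'
    obtain ⟨hpf, hpN⟩ := hp'
    have hp : p.Prime := Nat.prime_of_mem_primeFactors hpf
    rw [F_pp_inN D hp hpN]
    by_cases hpm : p ∣ m
    · have hpc : ¬p ∣ c := by
        intro hpc
        have : p ∣ 1 := hcop ▸ Nat.dvd_gcd hpm hpc
        exact hp.one_lt.ne' (Nat.dvd_one.mp this)
      rw [if_pos hpm, sig_pp_m hp hpm hpc]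
    · have hpc : p ∣ c := (hp.dvd_mul.mp (hmc ▸ hpN)).resolve_left hpm
      rw [if_neg hpm, sig_pp_c hp hpm hpc]
  rw [Finset.prod_congr rfl hIn]
  -- simplify the p ∣ N product to the ppart product over (N/m).primeFactors
  have hsplit : (∏ p ∈ f.primeFactors.filter (fun p => ¬¬p ∣ N),
      (if p ∣ m then 1 else (p : ℚ) ^ f.factorization p))
      = ∏ p ∈ c.primeFactors, (ppart f p : ℚ) := by
    rw [Finset.prod_ite, Finset.prod_const_one, one_mul, Finset.filter_filter]
    have hTsub : f.primeFactors.filter (fun p => ¬¬p ∣ N ∧ ¬p ∣ m) ⊆ c.primeFactors := by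
      intro p hp'
      rw [Finset.mem_filter] at hp'
      obtain ⟨hpf, hpN, hpm⟩ := hp'
      have hp : p.Prime := Nat.prime_of_mem_primeFactors hpf
      exact Nat.mem_primeFactors.mpr
        ⟨hp, (hp.dvd_mul.mp (hmc ▸ (not_not.mp hpN))).resolve_left hpm, hcne⟩
    refine Eq.trans (Finset.prod_congr rfl fun p hp' => ?_)
      (Finset.prod_subset hTsub fun p hpc' hnp => ?_)
    · rw [ppart]
      push_cast
      rfl
    · have hp : p.Prime := Nat.prime_of_mem_primeFactors hpc'
      have hpc : p ∣ c := Nat.dvd_of_mem_primeFactors hpc'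
      have hpm : ¬p ∣ m := by
        intro hpm
        have hpd : p ∣ 1 := hcop ▸ Nat.dvd_gcd hpm hpc
        exact hp.one_lt.ne' (Nat.dvd_one.mp hpd)
      have hpf : ¬p ∣ f := by
        intro hpf
        exact hnp (Finset.mem_filter.mpr
          ⟨Nat.mem_primeFactors.mpr ⟨hp, hpf, hfne⟩, not_not.mpr (hpc.trans hcdvd), hpm⟩)
      have h0 : f.factorization p = 0 := Nat.factorization_eq_zero_of_not_dvd hpf
      rw [ppart, h0, pow_zero, Nat.cast_one]
  rw [hsplit]
  -- final bookkeeping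
  rw [LvalM]
  have hC : (∏ p ∈ m.primeFactors, locC D p)
      = ∏ p ∈ m.primeFactors, (1 - (kron D p : ℚ)) := rfl
  have hA : (∏ p ∈ c.primeFactors, locA D f p)
      = (∏ p ∈ c.primeFactors, (ppart f p : ℚ)) *
        ∏ p ∈ c.primeFactors, ((1 - (kron D p : ℚ) / (p : ℚ)) / (1 - ((p : ℚ)⁻¹) ^ 2)) := by
    rw [← Finset.prod_mul_distrib]
    exact Finset.prod_congr rfl fun p _ => by rw [locA, mul_div_assoc]
  rw [hC, hA]
  ring
end

section
/- Let p be a prime and let n > 0 be an integer with n ≡ 0 or 3 (mod 4), written as −n = D_n·f_n² with D_n a fundamental discriminant. Then the local factors satisfy B_p(n) = (p + 1)·((2/p)·A_p(n) + (1/(1 − p))·C_p(n)) and A_p(n) = (p/(2(p + 1)))·B_p(n) + (p/(2(p − 1)))·C_p(n) (equalities of rational numbers). -/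
open scoped BigOperators

/-- Lemma: linear relations between the local factors `A_p`, `B_p`, `C_p`. -/
theorem local_relations_AB (p : ℕ) (hp : p.Prime) (n : ℕ) (hn : 0 < n)
    (h4 : n % 4 = 0 ∨ n % 4 = 3) (D : ℤ) (f : ℕ) (hD : IsFundDisc D) (hf : 1 ≤ f)
    (hDf : -(n : ℤ) = D * (f : ℤ) ^ 2) :
    locB D f p =
        ((p : ℚ) + 1) * ((2 / (p : ℚ)) * locA D f p + (1 / (1 - (p : ℚ))) * locC D p) ∧
      locA D f p =
        ((p : ℚ) / (2 * ((p : ℚ) + 1))) * locB D f p +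
          ((p : ℚ) / (2 * ((p : ℚ) - 1))) * locC D p := by
  have hp2 : (2 : ℚ) ≤ (p : ℚ) := by exact_mod_cast hp.two_le
  have h0 : (p : ℚ) ≠ 0 := by linarith
  have h1 : (p : ℚ) - 1 ≠ 0 := by linarith
  have h1' : (1 : ℚ) - (p : ℚ) ≠ 0 := by linarith
  have hp1 : (p : ℚ) + 1 ≠ 0 := by linarith
  have hsq : 1 - ((p : ℚ)⁻¹) ^ 2 ≠ 0 := by
    have : ((p : ℚ)⁻¹) ^ 2 < 1 := by
      rw [sq_lt_one_iff_abs_lt_one, abs_of_pos (by positivity)]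
      rw [inv_lt_one_iff₀]; right; linarith
    linarith
  have hq : 1 - ((p : ℚ)⁻¹) ^ 2 = ((p : ℚ) ^ 2 - 1) / (p : ℚ) ^ 2 := by
    field_simp
  have hsq2 : (p : ℚ) ^ 2 - 1 ≠ 0 := by nlinarith
  unfold locA locB locC
  rw [hq]
  constructor <;> field_simp <;> ring
end

section
/- Let p be a prime and let n > 0 be an integer with n ≡ 0 or 3 (mod 4), written as −n = D_n·f_n² with D_n a fundamental discriminant. Then the local factors satisfy D_p(n) = ((p + 1)/p)·A_p(n) + (1/(1 − p))·C_p(n) and D_p(n) = (1/2)·B_p(n) + (1/2)·C_p(n) (equalities of rational numbers). -/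
open scoped BigOperators

theorem sig_pow (p : ℕ) (hp : p.Prime) (k : ℕ) :
    ((p : ℚ) - 1) * (ArithmeticFunction.sigma 1 (p ^ k) : ℚ) = (p : ℚ) ^ (k + 1) - 1 := by
  rw [ArithmeticFunction.sigma_one_apply, Nat.sum_divisors_prime_pow hp]
  push_cast
  rw [mul_comm]
  simpa using geom_sum_mul (p : ℚ) (k + 1)


/-- Lemma: linear relations between the local factors `D_p`, `A_p`, `B_p`, `C_p`. -/
theorem local_relations_D (p : ℕ) (hp : p.Prime) (n : ℕ) (hn : 0 < n)
    (h4 : n % 4 = 0 ∨ n % 4 = 3) (D : ℤ) (f : ℕ) (hD : IsFundDisc D) (hf : 1 ≤ f)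
    (hDf : -(n : ℤ) = D * (f : ℤ) ^ 2) :
    locD D f p =
        (((p : ℚ) + 1) / (p : ℚ)) * locA D f p + (1 / (1 - (p : ℚ))) * locC D p ∧
      locD D f p = (1 / 2) * locB D f p + (1 / 2) * locC D p := by
  have hq1 : (1 : ℚ) < (p : ℚ) := by exact_mod_cast hp.one_lt
  have h0 : (p : ℚ) ≠ 0 := by linarith
  have hm1 : (p : ℚ) - 1 ≠ 0 := by intro h; linarith [sub_eq_zero.mp h]
  have hm1' : 1 - (p : ℚ) ≠ 0 := by intro h; linarith [sub_eq_zero.mp h]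
  have hp1 : (p : ℚ) + 1 ≠ 0 := by positivity
  have hinv : 1 - ((p : ℚ)⁻¹) ^ 2 ≠ 0 := by
    have : ((p : ℚ)⁻¹) ^ 2 < 1 := by
      rw [sq_lt_one_iff_abs_lt_one, abs_inv]
      rw [abs_of_pos (by linarith : (0:ℚ) < (p:ℚ))]
      rw [inv_lt_one_iff₀]; right; exact hq1
    linarith
  have hrw : 1 - ((p : ℚ)⁻¹) ^ 2 = ((p : ℚ) ^ 2 - 1) / (p : ℚ) ^ 2 := by
    field_simp
  have h21 : (p : ℚ) ^ 2 - 1 ≠ 0 := by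
    intro h
    have : ((p : ℚ) - 1) * ((p : ℚ) + 1) = 0 := by linear_combination h
    rcases mul_eq_zero.mp this with h' | h' <;> [exact hm1 h'; exact hp1 h']
  set k := f.factorization p with hk
  clear_value k
  have hpp : ppart f p = p ^ k := by rw [ppart, hk]
  have hs : ((ArithmeticFunction.sigma 1 (p ^ k) : ℕ) : ℚ) =
      ((p : ℚ) ^ (k + 1) - 1) / ((p : ℚ) - 1) := by
    field_simp
    linear_combination sig_pow p hp k
  unfold locD locA locB locC
  rw [hpp]
  rcases Nat.eq_zero_or_pos k with h | h
  · have hdiv : p ^ k / p = 0 := by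
      rw [h, pow_zero]; exact Nat.div_eq_of_lt hp.one_lt
    rw [hdiv, hs, h, hrw]
    simp only [map_zero, ArithmeticFunction.map_zero, pow_zero, pow_one, Nat.cast_zero, Nat.cast_one]
    constructor
    · field_simp
      ring
    · field_simp
      ring
  · obtain ⟨j, rfl⟩ : ∃ j, k = j + 1 := ⟨k - 1, (Nat.succ_pred_eq_of_pos h).symm⟩
    have hdiv : p ^ (j + 1) / p = p ^ j := by
      rw [pow_succ, Nat.mul_div_cancel _ hp.pos]
    have ht : ((ArithmeticFunction.sigma 1 (p ^ j) : ℕ) : ℚ) =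
        ((p : ℚ) ^ (j + 1) - 1) / ((p : ℚ) - 1) := by
      field_simp
      linear_combination sig_pow p hp j
    rw [hdiv, hs, ht, hrw]
    push_cast
    constructor
    · field_simp
      ring
    · field_simp
      ring
end
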